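/- For a monic polynomial f of degree n over A, the natural map from the splitting algebra of f_{n-1}(t) = f(t)/(t - τ_n) over A[τ_n] = A[t]/(f) to A_f is an isomorphism of A-algebras. -/

import Mathlib

open MvPolynomial Polynomial

/-- The ideal `(s₁ - f₁, ..., sₙ - fₙ)` defining the splitting algebra, where
`fᵢ = (-1)^i · coeff f (n - i)` are the signed coefficients of `f`. -/
noncomputable def splittingIdeal (A : Type*) [CommRing A] (f : Polynomial A) (n : ℕ) :
    Ideal (MvPolynomial (Fin n) A) :=
  Ideal.span (Set.range fun i : Fin n =>
    esymm (Fin n) A ((i : ℕ) + 1) -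
      MvPolynomial.C ((-1 : A) ^ ((i : ℕ) + 1) * f.coeff (n - ((i : ℕ) + 1))))

/-- The splitting algebra `A_f = A[t₁,...,tₙ]/(s₁ - f₁, ..., sₙ - fₙ)`. -/
noncomputable def SplittingAlgebra (A : Type*) [CommRing A] (f : Polynomial A) (n : ℕ) :=
  MvPolynomial (Fin n) A ⧸ splittingIdeal A f n

noncomputable instance (A : Type*) [CommRing A] (f : Polynomial A) (n : ℕ) :
    CommRing (SplittingAlgebra A f n) := Ideal.Quotient.commRing _

noncomputable instance (R A : Type*) [CommSemiring R] [CommRing A] [Algebra R A]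
    (f : Polynomial A) (n : ℕ) : Algebra R (SplittingAlgebra A f n) :=
  Ideal.Quotient.algebra R

/-- The universal roots `τᵢ` of `f` in the splitting algebra. -/
noncomputable def univRoot (A : Type*) [CommRing A] (f : Polynomial A) (n : ℕ) (i : Fin n) :
    SplittingAlgebra A f n :=
  Ideal.Quotient.mk (splittingIdeal A f n) (MvPolynomial.X i)

/-- The action of a permutation `σ` on the splitting algebra, sending `τᵢ` to `τ_{σ⁻¹ i}`. -/
noncomputable def permHom (A : Type*) [CommRing A] (f : Polynomial A) (n : ℕ)
    (σ : Equiv.Perm (Fin n)) : SplittingAlgebra A f n →ₐ[A] SplittingAlgebra A f n :=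
  Ideal.Quotient.liftₐ (splittingIdeal A f n)
    ((Ideal.Quotient.mkₐ A (splittingIdeal A f n)).comp
      (rename (σ.symm : Fin n → Fin n)))
    (by
      intro a ha
      have h : splittingIdeal A f n ≤ RingHom.ker
          ((Ideal.Quotient.mkₐ A (splittingIdeal A f n)).comp
            (rename (σ.symm : Fin n → Fin n))) := by
        rw [splittingIdeal, Ideal.span_le]
        rintro _ ⟨i, rfl⟩
        have : (rename (σ.symm : Fin n → Fin n))
            (esymm (Fin n) A ((i : ℕ) + 1) -
              MvPolynomial.C ((-1 : A) ^ ((i : ℕ) + 1) * f.coeff (n - ((i : ℕ) + 1)))) =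
            esymm (Fin n) A ((i : ℕ) + 1) -
              MvPolynomial.C ((-1 : A) ^ ((i : ℕ) + 1) * f.coeff (n - ((i : ℕ) + 1))) := by
          rw [map_sub, rename_esymm, rename_C]
        simp only [SetLike.mem_coe, RingHom.mem_ker, AlgHom.coe_comp, Function.comp_apply, this]
        rw [Ideal.Quotient.mkₐ_eq_mk, Ideal.Quotient.eq_zero_iff_mem]
        exact Ideal.subset_span ⟨i, rfl⟩
      exact h ha)



section Aux

variable {S : Type*} [CommRing S]

lemma esymm_of_prod_X_sub_C {m : ℕ} (y : Fin m → S) (p : Polynomial S)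
    (hprod : ∏ i, (Polynomial.X - Polynomial.C (y i)) = p) {k : ℕ} (h1 : 1 ≤ k) (h2 : k ≤ m) :
    (Finset.univ.val.map y).esymm k = (-1 : S) ^ k * p.coeff (m - k) := by
  have hcard : Multiset.card (Finset.univ.val.map y) = m := by simp
  have hprod' : ((Finset.univ.val.map y).map fun t => Polynomial.X - Polynomial.C t).prod = p := by
    rw [Multiset.map_map, ← hprod, Finset.prod_eq_multiset_prod]
    rfl
  have hk' : m - k ≤ Multiset.card (Finset.univ.val.map y) := by omega
  have := Multiset.prod_X_sub_C_coeff (Finset.univ.val.map y) hk'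
  rw [hprod', hcard] at this
  have hmk : m - (m - k) = k := by omega
  rw [this, hmk, ← mul_assoc, ← pow_add]
  rw [Even.neg_one_pow ⟨k, rfl⟩, one_mul]

lemma prod_X_sub_C_eq {m : ℕ} (y : Fin m → S) (p : Polynomial S) (hdeg : p.natDegree ≤ m)
    (hlead : p.coeff m = 1)
    (h : ∀ k : ℕ, 1 ≤ k → k ≤ m →
      (Finset.univ.val.map y).esymm k = (-1 : S) ^ k * p.coeff (m - k)) :
    ∏ i, (Polynomial.X - Polynomial.C (y i)) = p := by
  have hcard : Multiset.card (Finset.univ.val.map y) = m := by simp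
  have hprod : (∏ i, (Polynomial.X - Polynomial.C (y i)))
      = ((Finset.univ.val.map y).map fun t => Polynomial.X - Polynomial.C t).prod := by
    rw [Multiset.map_map, Finset.prod_eq_multiset_prod]
    rfl
  ext j
  rcases le_or_gt j m with hj | hj
  · have hj' : j ≤ Multiset.card (Finset.univ.val.map y) := by omega
    rw [hprod, Multiset.prod_X_sub_C_coeff _ hj', hcard]
    rcases Nat.eq_or_lt_of_le hj with rfl | hjlt
    · have he : (Multiset.map y Finset.univ.val).esymm 0 = 1 := by
        rw [Multiset.esymm, Multiset.powersetCard_zero_left, Multiset.map_singleton,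
          Multiset.prod_zero, Multiset.sum_singleton]
      rw [Nat.sub_self, he, pow_zero, one_mul, hlead]
    · have h1 : 1 ≤ m - j := by omega
      have h2 : m - j ≤ m := by omega
      rw [h _ h1 h2, ← mul_assoc, ← pow_add, Even.neg_one_pow ⟨m - j, rfl⟩, one_mul]
      congr 1
      omega
  · rw [Polynomial.coeff_eq_zero_of_natDegree_lt (by omega : p.natDegree < j)]
    refine Polynomial.coeff_eq_zero_of_natDegree_lt (lt_of_le_of_lt ?_ hj)
    refine (Polynomial.natDegree_prod_le _ _).trans ?_
    refine (Finset.sum_le_card_nsmul _ _ 1 fun i _ => Polynomial.natDegree_X_sub_C_le _).trans ?_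
    simp

end Aux

lemma mkₐ_eq_aeval_univRoot (A : Type*) [CommRing A] (f : Polynomial A) (m : ℕ) :
    (Ideal.Quotient.mkₐ A (splittingIdeal A f m)) = MvPolynomial.aeval (univRoot A f m) := by
  refine (MvPolynomial.aeval_unique _).trans ?_
  rfl

lemma aeval_univRoot {A : Type*} [CommRing A] (f : Polynomial A) (m : ℕ)
    (p : MvPolynomial (Fin m) A) :
    MvPolynomial.aeval (univRoot A f m) p = Ideal.Quotient.mk (splittingIdeal A f m) p :=
  (DFunLike.congr_fun (mkₐ_eq_aeval_univRoot A f m) p).symm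

lemma mk_esymm {A : Type*} [CommRing A] (f : Polynomial A) (m : ℕ) {k : ℕ}
    (h1 : 1 ≤ k) (h2 : k ≤ m) :
    Ideal.Quotient.mk (splittingIdeal A f m) (esymm (Fin m) A k)
      = algebraMap A (SplittingAlgebra A f m) ((-1 : A) ^ k * f.coeff (m - k)) := by
  have hlt : k - 1 < m := by omega
  have hk : (k - 1) + 1 = k := by omega
  have hmem : esymm (Fin m) A k - MvPolynomial.C ((-1 : A) ^ k * f.coeff (m - k))
      ∈ splittingIdeal A f m := by
    refine Ideal.subset_span ⟨⟨k - 1, hlt⟩, ?_⟩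
    simp only [hk]
  have halg : algebraMap A (SplittingAlgebra A f m) ((-1 : A) ^ k * f.coeff (m - k))
      = Ideal.Quotient.mk (splittingIdeal A f m)
          (MvPolynomial.C ((-1 : A) ^ k * f.coeff (m - k))) := by
    rw [← MvPolynomial.algebraMap_eq, Ideal.Quotient.mk_algebraMap]
    rfl
  rw [halg, Ideal.Quotient.mk_eq_mk_iff_sub_mem]
  exact hmem

lemma prod_X_sub_C_univRoot {A : Type*} [CommRing A] (f : Polynomial A) {m : ℕ}
    (hd : f.natDegree ≤ m) (hl : f.coeff m = 1) :
    ∏ i : Fin m, (Polynomial.X - Polynomial.C (univRoot A f m i))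
      = f.map (algebraMap A (SplittingAlgebra A f m)) := by
  refine prod_X_sub_C_eq _ _ ((Polynomial.natDegree_map_le).trans hd) ?_ ?_
  · rw [Polynomial.coeff_map, hl, map_one]
  intro k h1 h2
  have h3 : (Finset.univ.val.map (univRoot A f m)).esymm k
      = MvPolynomial.aeval (univRoot A f m) (esymm (Fin m) A k) :=
    (MvPolynomial.aeval_esymm_eq_multiset_esymm _ _ _ _).symm
  rw [h3, aeval_univRoot, mk_esymm f m h1 h2]
  rw [Polynomial.coeff_map, map_mul, map_pow, map_neg, map_one]

/-- The natural map from the splitting algebra of `f_{n-1}(t) = f(t)/(t - τₙ)` over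
`A[τₙ] = A[t]/(f)` to `A_f` is an isomorphism of `A`-algebras. -/
theorem splittingAlgebra_adjoinRoot {A : Type*} [CommRing A]
    (f : Polynomial A) (n : ℕ) (hmonic : f.Monic) (hdeg : f.natDegree = n + 1) :
    ∃ e : SplittingAlgebra (AdjoinRoot f)
        ((f.map (algebraMap A (AdjoinRoot f))) /ₘ
          (Polynomial.X - Polynomial.C (AdjoinRoot.root f))) n ≃ₐ[A]
        SplittingAlgebra A f (n + 1),
      (∀ i : Fin n,
        e (univRoot (AdjoinRoot f)
            ((f.map (algebraMap A (AdjoinRoot f))) /ₘ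
              (Polynomial.X - Polynomial.C (AdjoinRoot.root f))) n i) =
          univRoot A f (n + 1) i.castSucc) ∧
      e (algebraMap (AdjoinRoot f) _ (AdjoinRoot.root f)) =
        univRoot A f (n + 1) (Fin.last n) := by
    classical
  set g : Polynomial (AdjoinRoot f) :=
    (f.map (algebraMap A (AdjoinRoot f))) /ₘ
      (Polynomial.X - Polynomial.C (AdjoinRoot.root f)) with hg_def
  have hflead : f.coeff (n + 1) = 1 := by rw [← hdeg]; exact hmonic.coeff_natDegree
  have hroot : (f.map (algebraMap A (AdjoinRoot f))).IsRoot (AdjoinRoot.root f) := by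
    rw [Polynomial.IsRoot, Polynomial.eval_map, AdjoinRoot.algebraMap_eq]
    exact AdjoinRoot.eval₂_root f
  have hfg : (Polynomial.X - Polynomial.C (AdjoinRoot.root f)) * g
      = f.map (algebraMap A (AdjoinRoot f)) :=
    Polynomial.mul_divByMonic_eq_iff_isRoot.2 hroot
  have hgmonic : g.Monic :=
    (Polynomial.monic_X_sub_C _).of_mul_monic_left (by rw [hfg]; exact hmonic.map _)
  have hglead : g.coeff n = 1 := by
    rcases subsingleton_or_nontrivial (AdjoinRoot f) with h | h
    · exact Subsingleton.elim _ _
    · have hmapdeg : (f.map (algebraMap A (AdjoinRoot f))).natDegree = n + 1 := by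
        rw [hmonic.natDegree_map, hdeg]
      have hgd : g.natDegree = n := by
        rw [hg_def, Polynomial.natDegree_divByMonic _ (Polynomial.monic_X_sub_C _), hmapdeg,
          Polynomial.natDegree_X_sub_C]
        omega
      rw [← hgd]
      exact hgmonic.coeff_natDegree
  have hgdeg : g.natDegree ≤ n := by
    rcases subsingleton_or_nontrivial (AdjoinRoot f) with h | h
    · rw [Subsingleton.elim g 0, Polynomial.natDegree_zero]
      exact Nat.zero_le _
    · rw [hg_def, Polynomial.natDegree_divByMonic _ (Polynomial.monic_X_sub_C _),
        Polynomial.natDegree_X_sub_C]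
      exact Nat.sub_le_of_le_add ((Polynomial.natDegree_map_le).trans (by omega))
  -- the big splitting algebra
  have hS : ∏ i : Fin (n + 1), (Polynomial.X - Polynomial.C (univRoot A f (n + 1) i))
      = f.map (algebraMap A (SplittingAlgebra A f (n + 1))) :=
    prod_X_sub_C_univRoot f hdeg.le hflead
  have hlastroot : Polynomial.aeval (univRoot A f (n + 1) (Fin.last n)) f = 0 := by
    rw [Polynomial.aeval_def, ← Polynomial.eval_map, ← hS, Polynomial.eval_prod]
    refine Finset.prod_eq_zero (Finset.mem_univ (Fin.last n)) ?_
    simp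
  set φB : AdjoinRoot f →ₐ[A] SplittingAlgebra A f (n + 1) :=
    AdjoinRoot.liftAlgHom f (Algebra.ofId A _) (univRoot A f (n + 1) (Fin.last n)) hlastroot with hφB_def
  have hφBroot : φB (AdjoinRoot.root f) = univRoot A f (n + 1) (Fin.last n) := by
    rw [hφB_def]
    exact AdjoinRoot.liftAlgHom_root f (Algebra.ofId A _) (univRoot A f (n + 1) (Fin.last n)) hlastroot
  letI : Algebra (AdjoinRoot f) (SplittingAlgebra A f (n + 1)) := φB.toRingHom.toAlgebra
  haveI : IsScalarTower A (AdjoinRoot f) (SplittingAlgebra A f (n + 1)) :=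
    IsScalarTower.of_algebraMap_eq fun a => (φB.commutes a).symm
  set Φ : MvPolynomial (Fin n) (AdjoinRoot f) →ₐ[A] SplittingAlgebra A f (n + 1) :=
    (MvPolynomial.aeval (R := AdjoinRoot f)
      (fun i : Fin n => univRoot A f (n + 1) i.castSucc)).restrictScalars A with hΦ_def
  have hΦC : ∀ b : AdjoinRoot f, Φ (MvPolynomial.C b) = φB b := fun b =>
    MvPolynomial.aeval_C _ b
  have hΦX : ∀ i : Fin n, Φ (MvPolynomial.X i) = univRoot A f (n + 1) i.castSucc := fun i =>
    MvPolynomial.aeval_X _ i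
  have hgS : ∏ i : Fin n, (Polynomial.X - Polynomial.C (univRoot A f (n + 1) i.castSucc))
      = g.map (algebraMap (AdjoinRoot f) (SplittingAlgebra A f (n + 1))) := by
    apply (Polynomial.monic_X_sub_C (univRoot A f (n + 1) (Fin.last n))).isRegular.left
    show (Polynomial.X - Polynomial.C (univRoot A f (n + 1) (Fin.last n))) * _
      = (Polynomial.X - Polynomial.C (univRoot A f (n + 1) (Fin.last n))) * _
    rw [mul_comm, ← Fin.prod_univ_castSucc
      (f := fun i => Polynomial.X - Polynomial.C (univRoot A f (n + 1) i)), hS]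
    have hmapXC : (Polynomial.X - Polynomial.C (univRoot A f (n + 1) (Fin.last n)))
        = (Polynomial.X - Polynomial.C (AdjoinRoot.root f)).map
            (algebraMap (AdjoinRoot f) (SplittingAlgebra A f (n + 1))) := by
      rw [Polynomial.map_sub, Polynomial.map_X, Polynomial.map_C]
      rw [show algebraMap (AdjoinRoot f) (SplittingAlgebra A f (n + 1)) (AdjoinRoot.root f)
          = φB (AdjoinRoot.root f) from rfl, hφBroot]
    rw [hmapXC, ← Polynomial.map_mul, hfg, Polynomial.map_map,
      ← IsScalarTower.algebraMap_eq]
  have hker : ∀ a ∈ splittingIdeal (AdjoinRoot f) g n, Φ a = 0 := by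
    have hle : splittingIdeal (AdjoinRoot f) g n ≤ RingHom.ker Φ := by
      rw [splittingIdeal, Ideal.span_le]
      rintro _ ⟨i, rfl⟩
      simp only [SetLike.mem_coe, RingHom.mem_ker, map_sub, sub_eq_zero]
      have h1 : Φ (esymm (Fin n) (AdjoinRoot f) ((i : ℕ) + 1))
          = (Finset.univ.val.map fun j : Fin n => univRoot A f (n + 1) j.castSucc).esymm
              ((i : ℕ) + 1) :=
        MvPolynomial.aeval_esymm_eq_multiset_esymm _ _ _ _
      rw [h1, hΦC,
        esymm_of_prod_X_sub_C _ _ hgS (Nat.le_add_left 1 _) i.isLt,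
        map_mul, map_pow, map_neg, map_one, Polynomial.coeff_map]
      rfl
    exact fun a ha => hle ha
  set φ : SplittingAlgebra (AdjoinRoot f) g n →ₐ[A] SplittingAlgebra A f (n + 1) :=
    Ideal.Quotient.liftₐ _ Φ hker with hφ_def
  -- the other direction
  set y : Fin (n + 1) → SplittingAlgebra (AdjoinRoot f) g n :=
    Fin.snoc (univRoot (AdjoinRoot f) g n)
      (algebraMap (AdjoinRoot f) (SplittingAlgebra (AdjoinRoot f) g n) (AdjoinRoot.root f))
    with hy_def
  haveI hTower : IsScalarTower A (AdjoinRoot f) (SplittingAlgebra (AdjoinRoot f) g n) :=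
    Ideal.Quotient.isScalarTower A (AdjoinRoot f) (splittingIdeal (AdjoinRoot f) g n)
  have hT : ∏ i : Fin (n + 1), (Polynomial.X - Polynomial.C (y i))
      = f.map (algebraMap A (SplittingAlgebra (AdjoinRoot f) g n)) := by
    rw [Fin.prod_univ_castSucc]
    simp only [hy_def, Fin.snoc_castSucc, Fin.snoc_last]
    rw [prod_X_sub_C_univRoot g hgdeg hglead]
    have hmapXC : (Polynomial.X - Polynomial.C
          (algebraMap (AdjoinRoot f) (SplittingAlgebra (AdjoinRoot f) g n) (AdjoinRoot.root f)))
        = (Polynomial.X - Polynomial.C (AdjoinRoot.root f)).map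
            (algebraMap (AdjoinRoot f) (SplittingAlgebra (AdjoinRoot f) g n)) := by
      rw [Polynomial.map_sub, Polynomial.map_X, Polynomial.map_C]
    rw [hmapXC, mul_comm, ← Polynomial.map_mul, hfg, Polynomial.map_map,
      ← IsScalarTower.algebraMap_eq]
  have hkery : ∀ a ∈ splittingIdeal A f (n + 1),
      MvPolynomial.aeval y a = 0 := by
    have hle : splittingIdeal A f (n + 1) ≤ RingHom.ker (MvPolynomial.aeval y) := by
      rw [splittingIdeal, Ideal.span_le]
      rintro _ ⟨i, rfl⟩
      simp only [SetLike.mem_coe, RingHom.mem_ker, map_sub, sub_eq_zero]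
      have h1 : MvPolynomial.aeval y (esymm (Fin (n + 1)) A ((i : ℕ) + 1))
          = (Finset.univ.val.map y).esymm ((i : ℕ) + 1) :=
        MvPolynomial.aeval_esymm_eq_multiset_esymm _ _ _ _
      rw [h1, MvPolynomial.aeval_C,
        esymm_of_prod_X_sub_C _ _ hT (Nat.le_add_left 1 _) i.isLt,
        map_mul, map_pow, map_neg, map_one, Polynomial.coeff_map]
    exact fun a ha => hle ha
  set ψ : SplittingAlgebra A f (n + 1) →ₐ[A] SplittingAlgebra (AdjoinRoot f) g n :=
    Ideal.Quotient.liftₐ _ (MvPolynomial.aeval y) hkery with hψ_def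
  have hφmk : ∀ p, φ (Ideal.Quotient.mk (splittingIdeal (AdjoinRoot f) g n) p) = Φ p := by
    intro p
    rfl
  have hψmk : ∀ p, ψ (Ideal.Quotient.mk (splittingIdeal A f (n + 1)) p)
      = MvPolynomial.aeval y p := by
    intro p
    rfl
  have halgT : ∀ b : AdjoinRoot f,
      algebraMap (AdjoinRoot f) (SplittingAlgebra (AdjoinRoot f) g n) b
        = Ideal.Quotient.mk (splittingIdeal (AdjoinRoot f) g n) (MvPolynomial.C b) := by
    intro b
    rw [← MvPolynomial.algebraMap_eq, Ideal.Quotient.mk_algebraMap]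
    rfl
  have hφu : ∀ i : Fin n, φ (univRoot (AdjoinRoot f) g n i)
      = univRoot A f (n + 1) i.castSucc := by
    intro i
    rw [univRoot, hφmk, hΦX]
  have hφτ : φ (algebraMap (AdjoinRoot f) (SplittingAlgebra (AdjoinRoot f) g n)
      (AdjoinRoot.root f)) = univRoot A f (n + 1) (Fin.last n) := by
    rw [halgT, hφmk, hΦC, hφBroot]
  have hφalgB : ∀ b : AdjoinRoot f,
      φ (algebraMap (AdjoinRoot f) (SplittingAlgebra (AdjoinRoot f) g n) b) = φB b := by
    intro b
    rw [halgT, hφmk, hΦC]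
  have hψlast : ψ (univRoot A f (n + 1) (Fin.last n))
      = algebraMap (AdjoinRoot f) (SplittingAlgebra (AdjoinRoot f) g n) (AdjoinRoot.root f) := by
    rw [univRoot, hψmk, MvPolynomial.aeval_X, hy_def, Fin.snoc_last]
  have hψu : ∀ i : Fin (n + 1), ψ (univRoot A f (n + 1) i) = y i := by
    intro i
    rw [univRoot, hψmk, MvPolynomial.aeval_X]
  have hψφB : ∀ b : AdjoinRoot f, ψ (φB b)
      = algebraMap (AdjoinRoot f) (SplittingAlgebra (AdjoinRoot f) g n) b := by
    have : ψ.comp φB = IsScalarTower.toAlgHom A (AdjoinRoot f)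
        (SplittingAlgebra (AdjoinRoot f) g n) := by
      refine AdjoinRoot.algHom_ext ?_
      rw [AlgHom.comp_apply, hφBroot, hψlast]
      rfl
    intro b
    exact DFunLike.congr_fun this b
  have h1 : ∀ x, ψ (φ x) = x := by
    intro x
    obtain ⟨p, rfl⟩ := Ideal.Quotient.mk_surjective x
    rw [hφmk]
    induction p using MvPolynomial.induction_on with
    | C b => rw [hΦC, hψφB, halgT]
    | add p q hp hq => rw [map_add, map_add, hp, hq, map_add]; rfl
    | mul_X p i hp =>
        rw [map_mul, map_mul, hΦX, hp, map_mul]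
        congr 1
        rw [show (univRoot A f (n + 1) i.castSucc)
            = Ideal.Quotient.mk (splittingIdeal A f (n + 1)) (MvPolynomial.X i.castSucc)
            from rfl, hψmk, MvPolynomial.aeval_X, hy_def, Fin.snoc_castSucc]
        rfl
  have hφy : ∀ i : Fin (n + 1), φ (y i)
      = Ideal.Quotient.mk (splittingIdeal A f (n + 1)) (MvPolynomial.X i) := by
    intro i
    refine Fin.lastCases ?_ ?_ i
    · rw [hy_def, Fin.snoc_last, hφτ]
      rfl
    · intro j
      rw [hy_def, Fin.snoc_castSucc, hφu]
      rfl
  have h2 : ∀ x, φ (ψ x) = x := by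
    intro x
    obtain ⟨p, rfl⟩ := Ideal.Quotient.mk_surjective x
    rw [hψmk]
    induction p using MvPolynomial.induction_on with
    | C a =>
        rw [MvPolynomial.aeval_C, AlgHom.commutes]
        rw [← MvPolynomial.algebraMap_eq, Ideal.Quotient.mk_algebraMap]
        rfl
    | add p q hp hq => rw [map_add, map_add, hp, hq, map_add]; rfl
    | mul_X p i hp => rw [map_mul, MvPolynomial.aeval_X, map_mul, hp, hφy, map_mul]; rfl
  refine ⟨AlgEquiv.ofAlgHom φ ψ (AlgHom.ext h2) (AlgHom.ext h1), fun i => hφu i, hφτ⟩
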